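/- arXiv:1211.4093 — 4 statements merged into one kernel-verified Lean document; each statement's English description precedes it below -/
import Mathlib

section
/- Fairness projection lemma: Let P be a pathway, comp : species(P) → I a component map and J ⊆ I. If a maximal path π of LTS(P) is fair (π ⊨ Φ), then both π↾J and π↾∞J are abstractly fair: for every R ∈ PR, if R is enabled at infinitely many positions of the projected sequence then infinitely many of its steps are labelled R. -/
open scoped Classical

/-- A reaction: a triple of finite sets of species (reactants, products, catalysts). -/
structure Reaction (S : Type*) where
  re : Finset S
  pro : Finset S
  cat : Finset S

namespace Reaction
/-- The species involved in a reaction. -/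
def speciesSet {S : Type*} (R : Reaction S) : Set S := ↑R.re ∪ ↑R.pro ∪ ↑R.cat
end Reaction

variable {S I : Type*}

/-- A reaction is enabled at a state. -/
def enabled (R : Reaction S) (s : Set S) : Prop :=
  ↑R.re ⊆ s ∧ ¬ (↑R.pro : Set S) ⊆ s ∧ ↑R.cat ⊆ s

/-- The transition relation of the LTS: rule (cat) and rule (no-cat). -/
def Step (R : Reaction S) (s s' : Set S) : Prop :=
  (↑R.re ⊆ s ∧ ¬ (↑R.pro : Set S) ⊆ s ∧ R.cat ≠ ∅ ∧ ↑R.cat ⊆ s ∧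
      s' = (s \ ↑R.re) ∪ ↑R.pro) ∨
  (↑R.re ⊆ s ∧ ¬ (↑R.pro : Set S) ⊆ s ∧ R.cat = ∅ ∧ s' = s ∪ ↑R.pro)

/-- The species of a pathway. -/
def pathwaySpecies (P : Finset (Reaction S)) : Set S := ⋃ R ∈ P, R.speciesSet

/-- The set of components of a reaction: the image of its species under `comp`. -/
def compSet (comp : S → I) (R : Reaction S) : Set I := comp '' R.speciesSet

/-- species(J): all species of reactions having some component in J. -/
def speciesJ (P : Finset (Reaction S)) (comp : S → I) (J : Set I) : Set S :=
  {s | ∃ R ∈ P, (compSet comp R ∩ J).Nonempty ∧ s ∈ R.speciesSet}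

/-- Projection of a set of species onto J. -/
def projSet (P : Finset (Reaction S)) (comp : S → I) (J : Set I) (u : Set S) : Set S :=
  u ∩ speciesJ P comp J

/-- Projection of a finite set of species onto J. -/
noncomputable def projFin (P : Finset (Reaction S)) (comp : S → I) (J : Set I)
    (u : Finset S) : Finset S :=
  u.filter (· ∈ speciesJ P comp J)

/-- PR: the reactions of P all of whose components are in J. -/
def PR (P : Finset (Reaction S)) (comp : S → I) (J : Set I) : Set (Reaction S) :=
  {R | R ∈ P ∧ compSet comp R ⊆ J}

/-- The projected version of a reaction. -/
noncomputable def projReaction (P : Finset (Reaction S)) (comp : S → I) (J : Set I)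
    (R : Reaction S) : Reaction S :=
  ⟨projFin P comp J R.re, projFin P comp J R.pro, projFin P comp J R.cat⟩

/-- The self-loop version of a projected reaction. -/
noncomputable def loopReaction (P : Finset (Reaction S)) (comp : S → I) (J : Set I)
    (R : Reaction S) : Reaction S :=
  ⟨projFin P comp J R.re, projFin P comp J R.re, projFin P comp J R.cat⟩

/-- AR: the abstract reactions coming from reactions crossing the boundary of J. -/
def AR (P : Finset (Reaction S)) (comp : S → I) (J : Set I) : Set (Reaction S) :=
  {R' | ∃ R ∈ P, (compSet comp R ∩ J).Nonempty ∧ (compSet comp R ∩ Jᶜ).Nonempty ∧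
        (R' = projReaction P comp J R ∨ R' = loopReaction P comp J R)}

/-- A finite or infinite alternating sequence of states and (optional) reaction labels.
`len` is the number of steps (`⊤` for infinite); states live at positions `≤ len`,
labels at positions `< len`.  A label `none` denotes a stuttering step `*`. -/
structure RPath (S : Type*) where
  len : ℕ∞
  state : ℕ → Set S
  label : ℕ → Option (Reaction S)

/-- π is a path of the LTS of the set of reactions Q. -/
def IsPath (Q : Set (Reaction S)) (π : RPath S) : Prop :=
  ∀ i : ℕ, (i : ℕ∞) < π.len →
    ∃ R, π.label i = some R ∧ R ∈ Q ∧ Step R (π.state i) (π.state (i + 1))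

/-- π is a maximal path of the LTS of Q. -/
def IsMaximal (Q : Set (Reaction S)) (π : RPath S) : Prop :=
  IsPath Q π ∧
    (π.len = ⊤ ∨ ∃ n : ℕ, π.len = (n : ℕ∞) ∧ ∀ R ∈ Q, ¬ enabled R (π.state n))

/-- Fairness with respect to the reactions in Q: every reaction of Q enabled at
infinitely many positions occurs at infinitely many steps. -/
def FairFor (Q : Set (Reaction S)) (π : RPath S) : Prop :=
  ∀ R ∈ Q, {i : ℕ | (i : ℕ∞) ≤ π.len ∧ enabled R (π.state i)}.Infinite →
    {i : ℕ | (i : ℕ∞) < π.len ∧ π.label i = some R}.Infinite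
/-- Step i of π is kept by the projection onto J. -/
def keptStep (comp : S → I) (J : Set I) (π : RPath S) (i : ℕ) : Prop :=
  (i : ℕ∞) < π.len ∧ ∃ R, π.label i = some R ∧ (compSet comp R ∩ J).Nonempty

/-- The projection π↾J of a path: steps labelled by reactions with no component in J
are deleted and the remaining states are projected onto J. -/
noncomputable def projPath (P : Finset (Reaction S)) (comp : S → I) (J : Set I)
    (π : RPath S) : RPath S :=
  if {i | keptStep comp J π i}.Infinite then
    ⟨⊤, fun n => projSet P comp J (π.state (Nat.nth (keptStep comp J π) n)),
        fun n => π.label (Nat.nth (keptStep comp J π) n)⟩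
  else
    let m := {i | keptStep comp J π i}.ncard
    let endIdx : ℕ :=
      if π.len = ⊤ then (if m = 0 then 0 else Nat.nth (keptStep comp J π) (m - 1) + 1)
      else π.len.toNat
    ⟨(m : ℕ∞),
     fun n => projSet P comp J
       (π.state (if n < m then Nat.nth (keptStep comp J π) n else endIdx)),
     fun n => if n < m then π.label (Nat.nth (keptStep comp J π) n) else none⟩

/-- π↾∞J: if π↾J is finite, extend it with infinitely many stuttering steps
(labelled by the non-reaction symbol `*`, represented by `none`). -/
noncomputable def infExtend (π : RPath S) : RPath S :=
  if π.len = ⊤ then π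
  else ⟨⊤, fun n => π.state (min n π.len.toNat),
          fun n => if (n : ℕ∞) < π.len then π.label n else none⟩

/-- A finite or infinite sequence belongs to the LTS of Q iff every step labelled by a
reaction is a transition of that LTS, every stuttering step repeats the current state,
and the sequence is infinite or ends in a state at which no reaction of Q is enabled. -/
def BelongsTo (Q : Set (Reaction S)) (π : RPath S) : Prop :=
  (∀ i : ℕ, (i : ℕ∞) < π.len →
      (∀ R, π.label i = some R → R ∈ Q ∧ Step R (π.state i) (π.state (i + 1))) ∧
      (π.label i = none → π.state (i + 1) = π.state i)) ∧
  (π.len = ⊤ ∨ ∃ n : ℕ, π.len = (n : ℕ∞) ∧ ∀ R ∈ Q, ¬ enabled R (π.state n))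

/-- ACTL⁻ formulas. -/
inductive ACTL (S : Type*) where
  | tt : ACTL S
  | ff : ACTL S
  | atom (s : S) : ACTL S
  | natom (s : S) : ACTL S
  | and (f g : ACTL S) : ACTL S
  | or (f g : ACTL S) : ACTL S
  | au (f g : ACTL S) : ACTL S
  | auw (f g : ACTL S) : ACTL S

/-- The atomic propositions occurring in an ACTL⁻ formula. -/
def atoms {S : Type*} : ACTL S → Set S
  | .tt => ∅
  | .ff => ∅
  | .atom s => {s}
  | .natom s => {s}
  | .and f g => atoms f ∪ atoms g
  | .or f g => atoms f ∪ atoms g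
  | .au f g => atoms f ∪ atoms g
  | .auw f g => atoms f ∪ atoms g

/-- Satisfaction of an ACTL⁻ formula at a state, relative to a set `D` of designated
maximal paths: path quantifiers range over the paths of `D` starting at the state. -/
def Sat {S : Type*} (D : Set (RPath S)) : ACTL S → Set S → Prop
  | .tt, _ => True
  | .ff, _ => False
  | .atom a, t => a ∈ t
  | .natom a, t => a ∉ t
  | .and f g, t => Sat D f t ∧ Sat D g t
  | .or f g, t => Sat D f t ∨ Sat D g t
  | .au f g, t => ∀ π ∈ D, π.state 0 = t →
      ∃ m : ℕ, (m : ℕ∞) ≤ π.len ∧ Sat D g (π.state m) ∧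
        ∀ m' < m, Sat D f (π.state m')
  | .auw f g, t => ∀ π ∈ D, π.state 0 = t →
      ∀ m : ℕ, (m : ℕ∞) ≤ π.len →
        (∀ m' < m, ¬ Sat D g (π.state m')) → Sat D f (π.state m)

/-- The suffix of a path starting at its k-th state. -/
def suffixPath (π : RPath S) (k : ℕ) : RPath S :=
  ⟨π.len - (k : ℕ∞), fun n => π.state (k + n), fun n => π.label (k + n)⟩


section FairnessAux

variable {S I : Type*} {P : Finset (Reaction S)} {comp : S → I} {J : Set I}

lemma mem_species_of_mem_re {R : Reaction S} {x : S} (h : x ∈ (↑R.re : Set S)) :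
    x ∈ R.speciesSet := by simp [Reaction.speciesSet]; exact Or.inl (Or.inl (by exact_mod_cast h))

lemma mem_species_of_mem_pro {R : Reaction S} {x : S} (h : x ∈ (↑R.pro : Set S)) :
    x ∈ R.speciesSet := by simp [Reaction.speciesSet]; exact Or.inl (Or.inr (by exact_mod_cast h))

lemma mem_species_of_mem_cat {R : Reaction S} {x : S} (h : x ∈ (↑R.cat : Set S)) :
    x ∈ R.speciesSet := by simp [Reaction.speciesSet]; exact Or.inr (by exact_mod_cast h)

lemma species_subset_speciesJ {R : Reaction S} (hR : R ∈ P)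
    (hne : (compSet comp R ∩ J).Nonempty) : R.speciesSet ⊆ speciesJ P comp J :=
  fun _ hs => ⟨R, hR, hne, hs⟩

lemma compSet_inter_nonempty {R : Reaction S} (hRJ : compSet comp R ⊆ J)
    {s : Set S} (hen : enabled R s) : (compSet comp R ∩ J).Nonempty := by
  obtain ⟨x, hx, -⟩ := Set.not_subset.1 hen.2.1
  have hxs : comp x ∈ compSet comp R := ⟨x, mem_species_of_mem_pro hx, rfl⟩
  exact ⟨comp x, hxs, hRJ hxs⟩

lemma enabled_of_projSet {R : Reaction S} (hR : R ∈ P)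
    (hne : (compSet comp R ∩ J).Nonempty) {s : Set S}
    (h : enabled R (projSet P comp J s)) : enabled R s := by
  obtain ⟨h1, h2, h3⟩ := h
  exact ⟨h1.trans Set.inter_subset_left,
    fun hsub => h2 fun x hx =>
      ⟨hsub hx, species_subset_speciesJ hR hne (mem_species_of_mem_pro hx)⟩,
    h3.trans Set.inter_subset_left⟩

lemma step_mem_iff {R' : Reaction S} (hd : ∀ x ∈ R'.speciesSet, comp x ∉ J)
    {s s' : Set S} (hst : Step R' s s') {x : S} (hx : comp x ∈ J) :
    x ∈ s' ↔ x ∈ s := by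
  have hre : x ∉ (↑R'.re : Set S) := fun h => hd x (mem_species_of_mem_re h) hx
  have hpro : x ∉ (↑R'.pro : Set S) := fun h => hd x (mem_species_of_mem_pro h) hx
  rcases hst with ⟨-, -, -, -, rfl⟩ | ⟨-, -, -, rfl⟩ <;>
    simp [Set.mem_union, Set.mem_diff, hre, hpro]

lemma projPath_eq_of_infinite {π : RPath S} (hinf : {i | keptStep comp J π i}.Infinite) :
    projPath P comp J π =
      ⟨⊤, fun n => projSet P comp J (π.state (Nat.nth (keptStep comp J π) n)),
        fun n => π.label (Nat.nth (keptStep comp J π) n)⟩ := if_pos hinf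

lemma projPath_eq_of_finite {π : RPath S} (hfin : ¬ {i | keptStep comp J π i}.Infinite) :
    projPath P comp J π =
      ⟨({i | keptStep comp J π i}.ncard : ℕ∞),
       fun n => projSet P comp J (π.state
         (if n < {i | keptStep comp J π i}.ncard then Nat.nth (keptStep comp J π) n
          else (if π.len = ⊤ then
                  (if {i | keptStep comp J π i}.ncard = 0 then 0
                   else Nat.nth (keptStep comp J π) ({i | keptStep comp J π i}.ncard - 1) + 1)
                else π.len.toNat))),
       fun n => if n < {i | keptStep comp J π i}.ncard
                then π.label (Nat.nth (keptStep comp J π) n) else none⟩ := if_neg hfin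

lemma infExtend_eq_of_top {π : RPath S} (h : π.len = ⊤) : infExtend π = π := if_pos h

lemma infExtend_eq_of_ne_top {π : RPath S} (h : π.len ≠ ⊤) :
    infExtend π = ⟨⊤, fun n => π.state (min n π.len.toNat),
      fun n => if (n : ℕ∞) < π.len then π.label n else none⟩ := if_neg h

end FairnessAux

/-- **Fairness projection lemma.**  If a maximal path `π` of `LTS(P)` is fair, then
both `π↾J` and `π↾∞J` are abstractly fair: for every `R ∈ PR`, if `R` is enabled at
infinitely many positions of the projected sequence then infinitely many of its
steps are labelled `R`. -/
theorem fairness_projection {S I : Type*} (P : Finset (Reaction S)) (comp : S → I)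
    (J : Set I) (π : RPath S) (hmax : IsMaximal (↑P) π) (hfair : FairFor (↑P) π) :
    FairFor (PR P comp J) (projPath P comp J π) ∧
    FairFor (PR P comp J) (infExtend (projPath P comp J π)) := by
  classical
  obtain ⟨hpath, hterm⟩ := hmax
  by_cases hinf : {i | keptStep comp J π i}.Infinite
  · -- infinitely many kept steps
    have hproj := projPath_eq_of_infinite (P := P) hinf
    have hlen : π.len = ⊤ := by
      rcases hterm with h | ⟨n, hn, -⟩
      · exact h
      · exfalso
        refine hinf ((Set.finite_Iio n).subset fun i hi => ?_)
        have h1 := hi.1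
        rw [hn] at h1
        exact_mod_cast h1
    have key : FairFor (PR P comp J)
        ⟨⊤, fun n => projSet P comp J (π.state (Nat.nth (keptStep comp J π) n)),
          fun n => π.label (Nat.nth (keptStep comp J π) n)⟩ := by
      intro R hRPR hEn
      obtain ⟨n0, hn0⟩ := hEn.nonempty
      have hne : (compSet comp R ∩ J).Nonempty := compSet_inter_nonempty hRPR.2 hn0.2
      have hA : {i : ℕ | (i : ℕ∞) ≤ π.len ∧ enabled R (π.state i)}.Infinite := by
        refine (hEn.image ((Nat.nth_injective hinf).injOn)).mono ?_
        rintro _ ⟨n, ⟨-, hn⟩, rfl⟩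
        exact ⟨hlen ▸ le_top, enabled_of_projSet hRPR.1 hne hn⟩
      have hlab := hfair R (by exact_mod_cast hRPR.1) hA
      have hinj : Set.InjOn (Nat.count (keptStep comp J π))
          {i : ℕ | (i : ℕ∞) < π.len ∧ π.label i = some R} := by
        intro i hi j hj h
        exact Nat.count_injective ⟨hi.1, R, hi.2, hne⟩ ⟨hj.1, R, hj.2, hne⟩ h
      refine (hlab.image hinj).mono ?_
      rintro _ ⟨i, hi, rfl⟩
      have hki : keptStep comp J π i := ⟨hi.1, R, hi.2, hne⟩
      refine ⟨by exact_mod_cast WithTop.coe_lt_top _, ?_⟩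
      show π.label (Nat.nth _ _) = some R
      rw [Nat.nth_count hki]
      exact hi.2
    rw [hproj, infExtend_eq_of_top (by rfl)]
    exact ⟨key, key⟩
  · -- finitely many kept steps
    have hfin : {i | keptStep comp J π i}.Finite := Set.not_infinite.mp hinf
    set m := {i | keptStep comp J π i}.ncard with hm
    set E : ℕ := if π.len = ⊤ then
        (if m = 0 then 0 else Nat.nth (keptStep comp J π) (m - 1) + 1)
      else π.len.toNat with hE
    have hproj := projPath_eq_of_finite (P := P) hinf
    have hlen2 : (projPath P comp J π).len = (m : ℕ∞) := by rw [hproj]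
    have hext := infExtend_eq_of_ne_top (π := projPath P comp J π)
      (by rw [hlen2]; simp)
    have hlenExt : (infExtend (projPath P comp J π)).len = ⊤ := by rw [hext]
    have hstB : ∀ n, m ≤ n →
        (infExtend (projPath P comp J π)).state n = projSet P comp J (π.state E) := by
      intro n hn
      rw [hext]
      show (projPath P comp J π).state (min n (projPath P comp J π).len.toNat) = _
      rw [hlen2]
      simp only [ENat.toNat_coe]
      rw [min_eq_right hn, hproj]
      simp [hE, ← hm]
    constructor
    · intro R hR hEn
      exfalso
      refine hEn ((Set.finite_Iic m).subset fun i hi => ?_)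
      have h1 := hi.1
      rw [hlen2] at h1
      exact_mod_cast h1
    · intro R hRPR hEn
      exfalso
      obtain ⟨n, hn, hngt⟩ := hEn.exists_gt m
      have henE : enabled R (projSet P comp J (π.state E)) := by
        have h2 := hn.2
        rwa [hstB n hngt.le] at h2
      have hne : (compSet comp R ∩ J).Nonempty := compSet_inter_nonempty hRPR.2 henE
      have henE' : enabled R (π.state E) := enabled_of_projSet hRPR.1 hne henE
      rcases hterm with hlenT | ⟨k, hk, hnotEn⟩
      · -- π is infinite
        have hnk : ∀ i, E ≤ i → ¬ keptStep comp J π i := by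
          intro i hEi hki
          rw [hE, if_pos hlenT] at hEi
          rcases Nat.eq_zero_or_pos m with h0 | h0
          · have hempty : {j | keptStep comp J π j} = ∅ := (Set.ncard_eq_zero hfin).mp h0
            have hmem : i ∈ {j | keptStep comp J π j} := hki
            rw [hempty] at hmem
            exact hmem
          · rw [if_neg h0.ne'] at hEi
            have hcard : hfin.toFinset.card = m := by
              rw [hm, Set.ncard_eq_toFinset_card _ hfin]
            have h1 : Nat.count (keptStep comp J π) i < m := by
              rw [← hcard]; exact Nat.count_lt_card hfin hki
            have h2 : i ≤ Nat.nth (keptStep comp J π) (m - 1) := by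
              rw [← Nat.nth_count hki]
              exact Nat.nth_le_nth_of_lt_card hfin (by omega) (by omega)
            omega
        have hstab : ∀ i, E ≤ i → ∀ x, comp x ∈ J → (x ∈ π.state i ↔ x ∈ π.state E) := by
          intro i hEi
          obtain ⟨d, rfl⟩ := Nat.exists_eq_add_of_le hEi
          clear hEi
          induction d with
          | zero => intro x _; rfl
          | succ d ih =>
            intro x hx
            obtain ⟨R', hlab', hR'P, hstep⟩ := hpath (E + d)
              (by rw [hlenT]; exact_mod_cast WithTop.coe_lt_top _)
            have hd : ∀ y ∈ R'.speciesSet, comp y ∉ J := by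
              intro y hy hyJ
              exact hnk (E + d) (Nat.le_add_right _ _)
                ⟨by rw [hlenT]; exact_mod_cast WithTop.coe_lt_top _,
                 R', hlab', ⟨comp y, ⟨y, hy, rfl⟩, hyJ⟩⟩
            rw [show E + (d + 1) = (E + d) + 1 from rfl, step_mem_iff hd hstep hx]
            exact ih x hx
        have hA : {i : ℕ | (i : ℕ∞) ≤ π.len ∧ enabled R (π.state i)}.Infinite := by
          refine (Set.Ici_infinite E).mono fun i (hi : E ≤ i) => ?_
          refine ⟨hlenT ▸ le_top, ?_, ?_, ?_⟩
          · intro x hx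
            have hxJ : comp x ∈ J := hRPR.2 ⟨x, mem_species_of_mem_re hx, rfl⟩
            exact (hstab i hi x hxJ).mpr (henE'.1 hx)
          · intro hsub
            obtain ⟨x, hx, hxE⟩ := Set.not_subset.1 henE'.2.1
            have hxJ : comp x ∈ J := hRPR.2 ⟨x, mem_species_of_mem_pro hx, rfl⟩
            exact hxE ((hstab i hi x hxJ).mp (hsub hx))
          · intro x hx
            have hxJ : comp x ∈ J := hRPR.2 ⟨x, mem_species_of_mem_cat hx, rfl⟩
            exact (hstab i hi x hxJ).mpr (henE'.2.2 hx)
        have hlab := hfair R (by exact_mod_cast hRPR.1) hA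
        obtain ⟨i, hi, hiE⟩ := hlab.exists_gt E
        exact hnk i hiE.le ⟨hi.1, R, hi.2, hne⟩
      · -- π is finite with final state π.state k
        have hEeq : E = k := by
          rw [hE, if_neg (by rw [hk]; simp), hk]
          simp
        exact hnotEn R (by exact_mod_cast hRPR.1) (hEeq ▸ henE')
end

section
/- Occurrences of internal reactions are preserved by path projection: Let P be a pathway, comp : species(P) → I a component map, J ⊆ I, and R ∈ P with comp(R) ⊆ J. For every path π of LTS(P), the steps of π labelled R are in order-preserving bijection with the steps of π↾J labelled R; in particular, infinitely many steps of π are labelled R if and only if infinitely many steps of π↾J are labelled R. -/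
open scoped Classical

variable {S I : Type*}

/-- **Occurrences of internal reactions are preserved by path projection.**  For
`R ∈ P` with all components in `J` and any path `π` of `LTS(P)`, the steps of `π`
labelled `R` are in order-preserving bijection with the steps of `π↾J` labelled `R`;
in particular there are infinitely many of the former iff there are infinitely many
of the latter. -/
theorem occurrences_preserved {S I : Type*} (P : Finset (Reaction S)) (comp : S → I)
    (J : Set I) (π : RPath S) (hpath : IsPath (↑P) π) (R : Reaction S) (hR : R ∈ P)
    (hcomp : compSet comp R ⊆ J) :
    Nonempty ({i : ℕ | (i : ℕ∞) < π.len ∧ π.label i = some R} ≃o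
      {i : ℕ | (i : ℕ∞) < (projPath P comp J π).len ∧
        (projPath P comp J π).label i = some R}) ∧
    ({i : ℕ | (i : ℕ∞) < π.len ∧ π.label i = some R}.Infinite ↔
      {i : ℕ | (i : ℕ∞) < (projPath P comp J π).len ∧
        (projPath P comp J π).label i = some R}.Infinite) := by
  classical
  set p : ℕ → Prop := keptStep comp J π with hp
  have hkept : ∀ i : ℕ, (i : ℕ∞) < π.len → π.label i = some R → p i := by
    intro i hi hlab
    obtain ⟨R', hlab', hR'P, hstep⟩ := hpath i hi
    rw [hlab] at hlab'
    obtain rfl : R = R' := by exact (Option.some_injective _ hlab')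
    have hpro : R.pro.Nonempty := by
      rcases R.pro.eq_empty_or_nonempty with h | h
      · exfalso
        rcases hstep with ⟨_, hnp, _⟩ | ⟨_, hnp, _⟩ <;> exact hnp (by simp [h])
      · exact h
    obtain ⟨x, hx⟩ := hpro
    have hxs : x ∈ R.speciesSet := Or.inl (Or.inr (by exact_mod_cast hx))
    exact ⟨hi, R, hlab, ⟨comp x, ⟨x, hxs, rfl⟩, hcomp ⟨x, hxs, rfl⟩⟩⟩
  by_cases hinf : (setOf p).Infinite
  · -- infinite case
    have hproj : projPath P comp J π =
        ⟨⊤, fun n => projSet P comp J (π.state (Nat.nth p n)),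
         fun n => π.label (Nat.nth p n)⟩ := by
      rw [projPath, if_pos (show {i | keptStep comp J π i}.Infinite from hinf)]
    have hB : {i : ℕ | (i : ℕ∞) < (projPath P comp J π).len ∧
        (projPath P comp J π).label i = some R} =
        {n : ℕ | π.label (Nat.nth p n) = some R} := by
      rw [hproj]
      ext n
      simp [lt_top_iff_ne_top]
    rw [hB]
    set A := {i : ℕ | (i : ℕ∞) < π.len ∧ π.label i = some R} with hA
    set B := {n : ℕ | π.label (Nat.nth p n) = some R} with hBdef
    have hmem : ∀ n : B, Nat.nth p (n : ℕ) ∈ A := by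
      rintro ⟨n, hn⟩
      have hpn : p (Nat.nth p n) := Nat.nth_mem_of_infinite hinf n
      exact ⟨hpn.1, hn⟩
    set f : B → A := fun n => ⟨Nat.nth p (n : ℕ), hmem n⟩ with hf
    have hmono : StrictMono f := by
      rintro ⟨n, hn⟩ ⟨n', hn'⟩ h
      simpa [hf, Subtype.mk_lt_mk] using (Nat.nth_lt_nth hinf).2 h
    have hsurj : Function.Surjective f := by
      rintro ⟨i, hi, hlab⟩
      have hpi : p i := hkept i hi hlab
      have hni : Nat.nth p (Nat.count p i) = i := Nat.nth_count hpi
      refine ⟨⟨Nat.count p i, ?_⟩, ?_⟩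
      · show π.label (Nat.nth p (Nat.count p i)) = some R
        rw [hni]; exact hlab
      · apply Subtype.ext
        simpa [hf] using hni
    have e := (StrictMono.orderIsoOfSurjective f hmono hsurj).symm
    refine ⟨⟨e⟩, ?_⟩
    rw [← Set.infinite_coe_iff, ← Set.infinite_coe_iff]
    exact e.toEquiv.infinite_iff
  · -- finite case
    have hfin : (setOf p).Finite := Set.not_infinite.mp hinf
    set m := (setOf p).ncard with hm
    have hcard : m = hfin.toFinset.card := Set.ncard_eq_toFinset_card _ hfin
    have hproj : (projPath P comp J π).len = (m : ℕ∞) ∧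
        ∀ n : ℕ, (projPath P comp J π).label n =
          (if n < m then π.label (Nat.nth p n) else none) := by
      rw [projPath, if_neg (show ¬{i | keptStep comp J π i}.Infinite from hinf)]
      exact ⟨rfl, fun n => rfl⟩
    have hB : {i : ℕ | (i : ℕ∞) < (projPath P comp J π).len ∧
        (projPath P comp J π).label i = some R} =
        {n : ℕ | n < m ∧ π.label (Nat.nth p n) = some R} := by
      ext n
      rw [Set.mem_setOf_eq, Set.mem_setOf_eq, hproj.1, hproj.2 n, Nat.cast_lt]
      constructor
      · rintro ⟨h1, h2⟩
        rw [if_pos h1] at h2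
        exact ⟨h1, h2⟩
      · rintro ⟨h1, h2⟩
        exact ⟨h1, by rw [if_pos h1]; exact h2⟩
    rw [hB]
    set A := {i : ℕ | (i : ℕ∞) < π.len ∧ π.label i = some R} with hA
    set B := {n : ℕ | n < m ∧ π.label (Nat.nth p n) = some R} with hBdef
    have hmem : ∀ n : B, Nat.nth p (n : ℕ) ∈ A := by
      rintro ⟨n, hn, hlab⟩
      have hpn : p (Nat.nth p n) := Nat.nth_mem_of_lt_card hfin (hcard ▸ hn)
      exact ⟨hpn.1, hlab⟩
    set f : B → A := fun n => ⟨Nat.nth p (n : ℕ), hmem n⟩ with hf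
    have hmono : StrictMono f := by
      rintro ⟨n, hn⟩ ⟨n', hn'⟩ h
      have := Nat.nth_lt_nth_of_lt_card hfin (Subtype.mk_lt_mk.mp h) (hcard ▸ hn'.1)
      simpa [hf, Subtype.mk_lt_mk] using this
    have hsurj : Function.Surjective f := by
      rintro ⟨i, hi, hlab⟩
      have hpi : p i := hkept i hi hlab
      have hni : Nat.nth p (Nat.count p i) = i := Nat.nth_count hpi
      have hlt : Nat.count p i < m := hcard ▸ Nat.count_lt_card hfin hpi
      refine ⟨⟨Nat.count p i, hlt, ?_⟩, ?_⟩
      · rw [hni]; exact hlab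
      · apply Subtype.ext
        simpa [hf] using hni
    have e := (StrictMono.orderIsoOfSurjective f hmono hsurj).symm
    refine ⟨⟨e⟩, ?_⟩
    rw [← Set.infinite_coe_iff, ← Set.infinite_coe_iff]
    exact e.toEquiv.infinite_iff
end

section
/- Step simulation for internal reactions: Let P be a pathway, comp : species(P) → I a component map, J ⊆ I, and R ∈ P with comp(R) ⊆ J (so R ∈ PR). If s →_R s' is a transition of LTS(P), then s↾J →_R s'↾J is a transition of LTS_α(P↾J). -/
open scoped Classical

variable {S I : Type*}

/-- **Step simulation for internal reactions.**  If `R ∈ P` has all its components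
in `J` (so `R ∈ PR`) and `s →_R s'` is a transition of `LTS(P)`, then
`s↾J →_R s'↾J` is a transition of `LTS_α(P↾J) = LTS(PR ∪ AR)`. -/
theorem step_simulation {S I : Type*} (P : Finset (Reaction S)) (comp : S → I)
    (J : Set I) (R : Reaction S) (hR : R ∈ P) (hcomp : compSet comp R ⊆ J)
    (s s' : Set S) (hstep : Step R s s') :
    R ∈ PR P comp J ∪ AR P comp J ∧
    Step R (projSet P comp J s) (projSet P comp J s') := by
  -- pro is not contained in s, hence nonempty
  have hpro_nsub : ¬ (↑R.pro : Set S) ⊆ s := by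
    rcases hstep with ⟨_, h, _⟩ | ⟨_, h, _⟩ <;> exact h
  obtain ⟨x, hx, hxs⟩ : ∃ x ∈ (↑R.pro : Set S), x ∉ s := by
    by_contra h; push_neg at h; exact hpro_nsub h
  have hxsp : x ∈ R.speciesSet := Or.inl (Or.inr hx)
  have hne : (compSet comp R ∩ J).Nonempty :=
    ⟨comp x, ⟨x, hxsp, rfl⟩, hcomp ⟨x, hxsp, rfl⟩⟩
  have hsub : R.speciesSet ⊆ speciesJ P comp J := fun y hy => ⟨R, hR, hne, hy⟩
  have hre : (↑R.re : Set S) ⊆ speciesJ P comp J :=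
    fun y hy => hsub (Or.inl (Or.inl hy))
  have hpr : (↑R.pro : Set S) ⊆ speciesJ P comp J :=
    fun y hy => hsub (Or.inl (Or.inr hy))
  have hca : (↑R.cat : Set S) ⊆ speciesJ P comp J :=
    fun y hy => hsub (Or.inr hy)
  refine ⟨Or.inl ⟨hR, hcomp⟩, ?_⟩
  have hproj : ∀ u : Set S, projSet P comp J u = u ∩ speciesJ P comp J := fun _ => rfl
  rcases hstep with ⟨h1, h2, h3, h4, h5⟩ | ⟨h1, h2, h3, h5⟩
  · left
    refine ⟨fun y hy => ⟨h1 hy, hre hy⟩, fun h => h2 fun y hy => (h hy).1, h3,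
      fun y hy => ⟨h4 hy, hca hy⟩, ?_⟩
    rw [hproj, hproj, h5]
    ext y
    simp only [Set.mem_union, Set.mem_inter_iff, Set.mem_diff]
    constructor
    · rintro ⟨(⟨hys, hyr⟩ | hyp), hyJ⟩
      · exact Or.inl ⟨⟨hys, hyJ⟩, hyr⟩
      · exact Or.inr hyp
    · rintro (⟨⟨hys, hyJ⟩, hyr⟩ | hyp)
      · exact ⟨Or.inl ⟨hys, hyr⟩, hyJ⟩
      · exact ⟨Or.inr hyp, hpr hyp⟩
  · right
    refine ⟨fun y hy => ⟨h1 hy, hre hy⟩, fun h => h2 fun y hy => (h hy).1, h3, ?_⟩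
    rw [hproj, hproj, h5]
    ext y
    simp only [Set.mem_union, Set.mem_inter_iff]
    constructor
    · rintro ⟨hys | hyp, hyJ⟩
      · exact Or.inl ⟨hys, hyJ⟩
      · exact Or.inr hyp
    · rintro (⟨hys, hyJ⟩ | hyp)
      · exact ⟨Or.inl hys, hyJ⟩
      · exact ⟨Or.inr hyp, hpr hyp⟩
end

section
/- Eventual disabling of internal reactions along fairly projected-finite paths: Let P be a pathway, comp : species(P) → I a component map and J ⊆ I. If π is an infinite fair maximal path of LTS(P) such that only finitely many steps of π are labelled by reactions R with comp(R) ∩ J ≠ ∅, then there is a position k such that for every position k' ≥ k, no reaction R ∈ P with comp(R) ⊆ J is enabled at the k'-th state of π. -/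
open scoped Classical

variable {S I : Type*}

/-- **Eventual disabling of internal reactions along fairly projected-finite paths.**
If `π` is an infinite fair maximal path of `LTS(P)` with only finitely many steps
labelled by reactions having some component in `J`, then from some position on no
reaction of `P` all of whose components are in `J` is enabled. -/
theorem eventual_disabling {S I : Type*} (P : Finset (Reaction S)) (comp : S → I)
    (J : Set I) (π : RPath S) (hlen : π.len = ⊤)
    (hmax : IsMaximal (↑P) π) (hfair : FairFor (↑P) π)
    (hfin : {i : ℕ | ∃ R, π.label i = some R ∧ (compSet comp R ∩ J).Nonempty}.Finite) :
    ∃ k : ℕ, ∀ k' ≥ k, ∀ R ∈ P, compSet comp R ⊆ J → ¬ enabled R (π.state k') := by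
  by_contra h
  push_neg at h
  -- The set of positions where some internal reaction is enabled is infinite.
  set A : Set ℕ := {k' | ∃ R ∈ P, compSet comp R ⊆ J ∧ enabled R (π.state k')} with hA
  have hAinf : A.Infinite := by
    apply Set.infinite_of_not_bddAbove
    rintro ⟨b, hb⟩
    obtain ⟨k', hk', R, hRP, hRJ, hen⟩ := h (b + 1)
    have : k' ≤ b := hb ⟨R, hRP, hRJ, hen⟩
    omega
  -- Pigeonhole: some single reaction R is enabled infinitely often.
  have hex : ∃ R ∈ P, compSet comp R ⊆ J ∧ {k' | enabled R (π.state k')}.Infinite := by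
    by_contra hc
    push_neg at hc
    have hfinA : A.Finite := by
      have hsub : A ⊆ ⋃ R ∈ P, {k' | compSet comp R ⊆ J ∧ enabled R (π.state k')} := by
        rintro k' ⟨R, hRP, hRJ, hen⟩
        exact Set.mem_biUnion hRP ⟨hRJ, hen⟩
      refine Set.Finite.subset (Set.Finite.biUnion P.finite_toSet fun R hRP => ?_) hsub
      by_cases hRJ : compSet comp R ⊆ J
      · have := hc R hRP hRJ
        exact this.subset fun k' hk' => hk'.2
      · convert Set.finite_empty using 1
        ext k'; simp [hRJ]
    exact hAinf hfinA
  obtain ⟨R, hRP, hRJ, hinf⟩ := hex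
  -- By fairness, R occurs infinitely often.
  have hocc : {i : ℕ | (i : ℕ∞) < π.len ∧ π.label i = some R}.Infinite := by
    apply hfair R hRP
    refine hinf.mono fun i hi => ⟨?_, hi⟩
    simp [hlen]
  -- comp(R) ∩ J is nonempty since R is enabled somewhere (products not contained).
  obtain ⟨i, hi⟩ := hinf.nonempty
  obtain ⟨x, hx, hxn⟩ := Set.not_subset.mp hi.2.1
  have hnon : (compSet comp R ∩ J).Nonempty := by
    refine ⟨comp x, ⟨x, ?_, rfl⟩, hRJ ⟨x, Or.inl (Or.inr hx), rfl⟩⟩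
    exact Or.inl (Or.inr hx)
  -- Contradiction with finiteness of J-labelled steps.
  apply hocc
  apply hfin.subset
  rintro j ⟨-, hj⟩
  exact ⟨R, hj, hnon⟩
end
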